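/- Every \alpha \in \Delta_0^+ satisfies exactly one of the following three conditions: (a) \alpha \in \Delta_0'^+, i.e. the coordinates of \alpha at 0 and 1 both vanish; (b) \alpha + \sigma(\alpha) \in \mathbb{Z}_{>0}\cdot\delta; (c) there exists \beta \in \Delta_0' with \sigma(\beta) \ne \beta such that \alpha + \sigma(\alpha) = \delta + \beta + \sigma(\beta). -/
import Mathlib

/-!
Statement 6: For the affine root system of type `D_n^{(1)}` (`n ≥ 4`) with the
admissible diagram automorphism `σ` swapping `α_0 ↔ α_1` and `α_{n-1} ↔ α_n`,
every `α ∈ Δ₀⁺` satisfies exactly one of: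
(a) `α ∈ Δ₀'⁺` (coordinates at `0` and `1` vanish);
(b) `α + σ(α) ∈ ℤ_{>0}·δ`;
(c) `∃ β ∈ Δ₀'` with `σ(β) ≠ β` and `α + σ(α) = δ + β + σ(β)`.
-/

namespace Stmt6

/-- The root lattice `Q = ⨁_{i ∈ I} ℤ α_i` for `I = {0,1,…,n}`. -/
abbrev Q (n : ℕ) := Fin (n + 1) → ℤ

/-- The edges of the Dynkin diagram of affine type `D_n^{(1)}`. -/
abbrev edge (n i j : ℕ) : Prop :=
  (i + 1 = j ∧ 2 ≤ i ∧ j ≤ n - 1) ∨ (j + 1 = i ∧ 2 ≤ j ∧ i ≤ n - 1) ∨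
  (i = 0 ∧ j = 2) ∨ (i = 2 ∧ j = 0) ∨ (i = 1 ∧ j = 2) ∨ (i = 2 ∧ j = 1) ∨
  (i = n - 2 ∧ j = n) ∨ (i = n ∧ j = n - 2)

/-- The generalized Cartan matrix of type `D_n^{(1)}`. -/
def CM (n : ℕ) (i j : Fin (n + 1)) : ℤ :=
  if i = j then 2 else if edge n (i : ℕ) (j : ℕ) then -1 else 0

/-- The symmetric bilinear form `B` on `Q` determined by the Cartan matrix. -/
def B (n : ℕ) (v w : Q n) : ℤ := ∑ i, ∑ j, v i * CM n i j * w j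

/-- The set of positive real roots. -/
def ΔrePos (n : ℕ) : Set (Q n) := {v | (∀ i, 0 ≤ v i) ∧ B n v v = 2}

/-- The set `Δ₀⁺` of positive roots of the finite root system of type `D_n`. -/
def Δ0Pos (n : ℕ) : Set (Q n) := {v | v ∈ ΔrePos n ∧ v 0 = 0}

/-- The primitive null root `δ`. -/
def δ (n : ℕ) : Q n := fun i =>
  if (i : ℕ) = 0 ∨ (i : ℕ) = 1 ∨ (i : ℕ) = n - 1 ∨ (i : ℕ) = n then 1 else 2

/-- The involution of the index set `{0,…,n}` swapping `0 ↔ 1` and `n-1 ↔ n`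
(for `n ≥ 4`). -/
def τ (n : ℕ) (i : Fin (n + 1)) : Fin (n + 1) :=
  ⟨if (i : ℕ) = 0 then min 1 n else if (i : ℕ) = 1 then 0
    else if (i : ℕ) = n - 1 then n else if (i : ℕ) = n then n - 1 else (i : ℕ),
   by have := i.isLt; split_ifs <;> omega⟩

/-- The admissible diagram automorphism `σ` (on coordinates). -/
def σmap (n : ℕ) (v : Q n) : Q n := fun i => v (τ n i)

/-- The `σ`-stable subsystem `Δ₀'` of type `D_{n-1}` supported on `I ∖ {0, 1}`. -/
def Δ0' (n : ℕ) : Set (Q n) := {v | B n v v = 2 ∧ v 0 = 0 ∧ v 1 = 0}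

/-- The positive part `Δ₀'⁺ = Δ₀' ∩ ℕ^I`. -/
def Δ0'Pos (n : ℕ) : Set (Q n) := {v | v ∈ Δ0' n ∧ ∀ i, 0 ≤ v i}

/-! ### Auxiliary machinery -/

open Finset

/-- Coordinates of `v : Q n` as a function on `ℕ` (zero outside the index range). -/
def uu (n : ℕ) (v : Q n) : ℕ → ℤ := fun i => if h : i < n + 1 then v ⟨i, h⟩ else 0

lemma uu_coord {n : ℕ} (v : Q n) (i : Fin (n+1)) : v i = uu n v i := by
  simp [uu, i.isLt]

lemma B_apply {n : ℕ} (v : Q n) :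
    B n v v = ∑ i ∈ range (n+1), ∑ j ∈ range (n+1),
      uu n v i * (if i = j then 2 else if edge n i j then -1 else 0) * uu n v j := by
  rw [B]
  rw [← Fin.sum_univ_eq_sum_range (fun i => ∑ j ∈ range (n+1),
      uu n v i * (if i = j then 2 else if edge n i j then -1 else 0) * uu n v j) (n+1)]
  refine Finset.sum_congr rfl fun i _ => ?_
  rw [← Fin.sum_univ_eq_sum_range (fun j =>
      uu n v ↑i * (if ↑i = j then 2 else if edge n ↑i j then -1 else 0) * uu n v j) (n+1)]
  refine Finset.sum_congr rfl fun j _ => ?_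
  rw [← uu_coord, ← uu_coord]
  simp [CM, Fin.ext_iff]

lemma cm_decomp (m : ℕ) (i j : ℕ) (a b : ℤ) :
    a * (if i = j then (2:ℤ) else if edge (m+4) i j then -1 else 0) * b =
      2 * (if i = j then a * b else 0)
      - (if j = i + 1 ∧ 2 ≤ i ∧ i + 1 ≤ m + 3 then a * b else 0)
      - (if i = j + 1 ∧ 2 ≤ j ∧ j + 1 ≤ m + 3 then a * b else 0)
      - (if i = 0 ∧ j = 2 then a * b else 0)
      - (if i = 2 ∧ j = 0 then a * b else 0)
      - (if i = 1 ∧ j = 2 then a * b else 0)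
      - (if i = 2 ∧ j = 1 then a * b else 0)
      - (if i = m + 2 ∧ j = m + 4 then a * b else 0)
      - (if i = m + 4 ∧ j = m + 2 then a * b else 0) := by
  by_cases hij : i = j
  · rw [if_pos hij, if_pos hij, if_neg (by omega), if_neg (by omega), if_neg (by omega),
      if_neg (by omega), if_neg (by omega), if_neg (by omega), if_neg (by omega),
      if_neg (by omega)]
    ring
  · rw [if_neg hij, if_neg hij]
    by_cases he : edge (m+4) i j
    · rw [if_pos he]
      unfold edge at he
      rcases he with h|h|h|h|h|h|h|h
      · rw [if_pos (by omega), if_neg (by omega), if_neg (by omega), if_neg (by omega),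
          if_neg (by omega), if_neg (by omega), if_neg (by omega), if_neg (by omega)]; ring
      · rw [if_neg (by omega), if_pos (by omega), if_neg (by omega), if_neg (by omega),
          if_neg (by omega), if_neg (by omega), if_neg (by omega), if_neg (by omega)]; ring
      · rw [if_neg (by omega), if_neg (by omega), if_pos (by omega), if_neg (by omega),
          if_neg (by omega), if_neg (by omega), if_neg (by omega), if_neg (by omega)]; ring
      · rw [if_neg (by omega), if_neg (by omega), if_neg (by omega), if_pos (by omega),
          if_neg (by omega), if_neg (by omega), if_neg (by omega), if_neg (by omega)]; ring
      · rw [if_neg (by omega), if_neg (by omega), if_neg (by omega), if_neg (by omega),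
          if_pos (by omega), if_neg (by omega), if_neg (by omega), if_neg (by omega)]; ring
      · rw [if_neg (by omega), if_neg (by omega), if_neg (by omega), if_neg (by omega),
          if_neg (by omega), if_pos (by omega), if_neg (by omega), if_neg (by omega)]; ring
      · rw [if_neg (by omega), if_neg (by omega), if_neg (by omega), if_neg (by omega),
          if_neg (by omega), if_neg (by omega), if_pos (by omega), if_neg (by omega)]; ring
      · rw [if_neg (by omega), if_neg (by omega), if_neg (by omega), if_neg (by omega),
          if_neg (by omega), if_neg (by omega), if_neg (by omega), if_pos (by omega)]; ring
    · rw [if_neg he]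
      unfold edge at he
      rw [if_neg (by omega), if_neg (by omega), if_neg (by omega), if_neg (by omega),
        if_neg (by omega), if_neg (by omega), if_neg (by omega), if_neg (by omega)]
      ring

lemma sum2_diag (N : ℕ) (f : ℕ → ℤ) :
    ∑ i ∈ range N, ∑ j ∈ range N, (if i = j then f i * f j else 0)
      = ∑ i ∈ range N, f i ^ 2 := by
  refine sum_congr rfl fun i hi => ?_
  rw [Finset.sum_ite_eq (range N) i (fun j => f i * f j), if_pos hi]
  ring

lemma sum2_pair (N a b : ℕ) (ha : a < N) (hb : b < N) (f : ℕ → ℤ) :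
    ∑ i ∈ range N, ∑ j ∈ range N, (if i = a ∧ j = b then f i * f j else 0)
      = f a * f b := by
  rw [Finset.sum_eq_single_of_mem a (mem_range.2 ha)]
  · rw [Finset.sum_eq_single_of_mem b (mem_range.2 hb)]
    · simp
    · intro c _ hc; rw [if_neg (by tauto)]
  · intro c _ hc
    exact Finset.sum_eq_zero fun d _ => by rw [if_neg (by tauto)]

lemma sum2_chain (m : ℕ) (F : ℕ → ℕ → ℤ) :
    ∑ i ∈ range (m+5), ∑ j ∈ range (m+5),
      (if j = i + 1 ∧ 2 ≤ i ∧ i + 1 ≤ m + 3 then F i j else 0)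
      = ∑ k ∈ range (m+1), F (k+2) (k+3) := by
  have h1 : ∀ i ∈ range (m+5),
      (∑ j ∈ range (m+5), (if j = i + 1 ∧ 2 ≤ i ∧ i + 1 ≤ m + 3 then F i j else 0))
      = (if 2 ≤ i ∧ i ≤ m + 2 then F i (i+1) else 0) := by
    intro i hi
    have hpt : ∀ j, (if j = i + 1 ∧ 2 ≤ i ∧ i + 1 ≤ m + 3 then F i j else 0)
        = if j = i + 1 then (if 2 ≤ i ∧ i ≤ m + 2 then F i j else 0) else 0 := by
      intro j
      split_ifs <;> first | rfl | (exfalso; omega)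
    rw [sum_congr rfl fun j _ => hpt j,
      Finset.sum_ite_eq' (range (m+5)) (i+1) (fun j => if 2 ≤ i ∧ i ≤ m + 2 then F i j else 0)]
    rw [mem_range] at hi
    split_ifs <;> first | rfl | (exfalso; simp [mem_range] at *; omega)
  rw [sum_congr rfl h1, ← Finset.sum_filter]
  have h2 : (range (m+5)).filter (fun i => 2 ≤ i ∧ i ≤ m + 2) = Finset.Ico 2 (m+3) := by
    ext k; simp [Finset.mem_Ico]; omega
  rw [h2, Finset.sum_Ico_eq_sum_range]
  refine sum_congr (by congr 1) fun k _ => ?_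
  rw [show 2 + k = k + 2 from by omega]

lemma Bform (m : ℕ) (v : Q (m+4)) :
    B (m+4) v v =
      2 * (∑ i ∈ range (m+5), uu (m+4) v i ^ 2)
      - 2 * (uu (m+4) v 0 * uu (m+4) v 2) - 2 * (uu (m+4) v 1 * uu (m+4) v 2)
      - 2 * (∑ k ∈ range (m+1), uu (m+4) v (k+2) * uu (m+4) v (k+3))
      - 2 * (uu (m+4) v (m+2) * uu (m+4) v (m+4)) := by
  set f := uu (m+4) v with hf
  rw [B_apply]
  rw [sum_congr rfl fun i _ => sum_congr rfl fun j _ => cm_decomp m i j (f i) (f j)]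
  simp only [Finset.sum_sub_distrib, ← Finset.mul_sum]
  rw [sum2_diag (m+5) f]
  rw [sum2_chain m (fun a b => f a * f b)]
  have hT : ∑ i ∈ range (m+5), ∑ j ∈ range (m+5),
      (if i = j + 1 ∧ 2 ≤ j ∧ j + 1 ≤ m + 3 then f i * f j else 0)
      = ∑ k ∈ range (m+1), f (k+2) * f (k+3) := by
    rw [Finset.sum_comm]
    rw [sum2_chain m (fun a b => f b * f a)]
    exact sum_congr rfl fun k _ => mul_comm _ _
  rw [hT]
  rw [sum2_pair (m+5) 0 2 (by omega) (by omega) f]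
  rw [sum2_pair (m+5) 2 0 (by omega) (by omega) f]
  rw [sum2_pair (m+5) 1 2 (by omega) (by omega) f]
  rw [sum2_pair (m+5) 2 1 (by omega) (by omega) f]
  rw [sum2_pair (m+5) (m+2) (m+4) (by omega) (by omega) f]
  rw [sum2_pair (m+5) (m+4) (m+2) (by omega) (by omega) f]
  ring

lemma telescope (u : ℕ → ℤ) (N : ℕ) :
    u 1 ^ 2 + ∑ k ∈ range N, (u (k+2) - u (k+1)) ^ 2
      = 2 * ∑ k ∈ range (N+1), u (k+1) ^ 2 - u (N+1) ^ 2
        - 2 * ∑ k ∈ range N, u (k+1) * u (k+2) := by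
  induction N with
  | zero => simp; ring
  | succ N ih =>
    rw [sum_range_succ, sum_range_succ (fun k => u (k+1) * u (k+2)),
      sum_range_succ (fun k => u (k+1) ^ 2) (N+1)]
    linear_combination ih

lemma Bsq_core (m : ℕ) (u : ℕ → ℤ) (h0 : u 0 = 0) :
    2 * (∑ i ∈ range (m+5), u i ^ 2)
      - 2 * (u 0 * u 2) - 2 * (u 1 * u 2)
      - 2 * (∑ k ∈ range (m+1), u (k+2) * u (k+3))
      - 2 * (u (m+2) * u (m+4))
    = u 1 ^ 2 + ∑ k ∈ range (m+1), (u (k+2) - u (k+1)) ^ 2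
      + (u (m+3) + u (m+4) - u (m+2)) ^ 2 + (u (m+4) - u (m+3)) ^ 2 := by
  have hT := telescope u (m+1)
  have e1 : ∑ i ∈ range (m+5), u i ^ 2
      = ∑ k ∈ range (m+4), u (k+1) ^ 2 + u 0 ^ 2 := by
    rw [Finset.sum_range_succ' (fun i => u i ^ 2) (m+4)]
  have e2 : ∑ k ∈ range (m+4), u (k+1) ^ 2
      = ∑ k ∈ range (m+2), u (k+1) ^ 2 + u (m+3) ^ 2 + u (m+4) ^ 2 := by
    rw [sum_range_succ (fun k => u (k+1) ^ 2) (m+3), sum_range_succ (fun k => u (k+1) ^ 2) (m+2)]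
  have e3 : ∑ k ∈ range (m+1), u (k+1) * u (k+2)
      = u 1 * u 2 + ∑ k ∈ range m, u (k+2) * u (k+3) := by
    rw [Finset.sum_range_succ' (fun k => u (k+1) * u (k+2)) m]
    ring
  have e4 : ∑ k ∈ range (m+1), u (k+2) * u (k+3)
      = ∑ k ∈ range m, u (k+2) * u (k+3) + u (m+2) * u (m+3) := by
    rw [sum_range_succ (fun k => u (k+2) * u (k+3)) m]
  rw [e1, e2, e4]
  simp only [show m+1+1 = m+2 from rfl] at hT
  rw [e3] at hT
  linear_combination (-1) * hT + (2 * u 0 - 2 * u 2) * h0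

lemma Bsq (m : ℕ) (v : Q (m+4)) (h0 : uu (m+4) v 0 = 0) :
    B (m+4) v v
      = uu (m+4) v 1 ^ 2
        + ∑ k ∈ range (m+1), (uu (m+4) v (k+2) - uu (m+4) v (k+1)) ^ 2
        + (uu (m+4) v (m+3) + uu (m+4) v (m+4) - uu (m+4) v (m+2)) ^ 2
        + (uu (m+4) v (m+4) - uu (m+4) v (m+3)) ^ 2 :=
  (Bform m v).trans (Bsq_core m (uu (m+4) v) h0)

lemma one_le_sq {t : ℤ} (h : t ≠ 0) : 1 ≤ t ^ 2 := by
  rcases lt_or_gt_of_ne h with h' | h' <;> nlinarith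

lemma sq_eq_one {t : ℤ} (h : t ^ 2 = 1) : t = 1 ∨ t = -1 := by
  have h2 : (t - 1) * (t + 1) = 0 := by linear_combination h
  rcases mul_eq_zero.1 h2 with h3 | h3
  · left; linarith
  · right; linarith

lemma diffs_const (u : ℕ → ℤ) (h1 : u 1 = 1) (M : ℕ)
    (hd : ∀ k, k < M → u (k+2) = u (k+1)) :
    ∀ t, t < M + 1 → u (t+1) = 1 := by
  intro t
  induction t with
  | zero => intro _; exact h1
  | succ t ih =>
    intro h
    have e : t + 1 + 1 = t + 2 := rfl
    rw [e, hd t (by omega)]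
    exact ih (by omega)

lemma diffs_step (u : ℕ → ℤ) (ε : ℤ) (h1 : u 1 = 1) (M k0 : ℕ) (hk0 : k0 < M)
    (hd : ∀ k, k < M → u (k+2) - u (k+1) = if k = k0 then ε else 0) :
    ∀ t, t < M + 1 → (t + 1 < k0 + 2 ∧ u (t+1) = 1) ∨ (k0 + 2 ≤ t + 1 ∧ u (t+1) = 1 + ε) := by
  intro t
  induction t with
  | zero => intro _; left; exact ⟨by omega, h1⟩
  | succ t ih =>
    intro h
    have e : t + 1 + 1 = t + 2 := rfl
    rw [e]
    have hdt := hd t (by omega)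
    rcases ih (by omega) with ⟨ha, hb⟩ | ⟨ha, hb⟩
    · by_cases ht : t = k0
      · rw [if_pos ht] at hdt
        right; exact ⟨by omega, by omega⟩
      · rw [if_neg ht] at hdt
        left; exact ⟨by omega, by omega⟩
    · have ht : t ≠ k0 := by omega
      rw [if_neg ht] at hdt
      right; exact ⟨by omega, by omega⟩

lemma classify (m : ℕ) (u : ℕ → ℤ) (h1 : u 1 = 1)
    (hsq : u 1 ^ 2 + ∑ k ∈ range (m+1), (u (k+2) - u (k+1)) ^ 2
      + (u (m+3) + u (m+4) - u (m+2)) ^ 2 + (u (m+4) - u (m+3)) ^ 2 = 2) :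
    ((∀ k, 1 ≤ k → k ≤ m+2 → u k = 1) ∧ u (m+3) + u (m+4) = 1) ∨
    (∃ j : ℕ, ∃ ε : ℤ, 2 ≤ j ∧ j ≤ m+3 ∧ (ε = 1 ∨ ε = -1) ∧
      (∀ k, 1 ≤ k → k ≤ m+2 → ((k < j ∧ u k = 1) ∨ (j ≤ k ∧ u k = 1 + ε))) ∧
      u (m+3) + u (m+4) = 1 + ε) := by
  have hSnn : 0 ≤ ∑ k ∈ range (m+1), (u (k+2) - u (k+1)) ^ 2 :=
    sum_nonneg fun k _ => sq_nonneg _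
  have hAnn : (0:ℤ) ≤ (u (m+3) + u (m+4) - u (m+2)) ^ 2 := sq_nonneg _
  have hCnn : (0:ℤ) ≤ (u (m+4) - u (m+3)) ^ 2 := sq_nonneg _
  have hkey : ∑ k ∈ range (m+1), (u (k+2) - u (k+1)) ^ 2
      + (u (m+3) + u (m+4) - u (m+2)) ^ 2 + (u (m+4) - u (m+3)) ^ 2 = 1 := by
    rw [h1] at hsq; linarith
  have hconst : (∀ k ∈ range (m+1), (u (k+2) - u (k+1)) ^ 2 = 0) →
      ∀ k, 1 ≤ k → k ≤ m+2 → u k = 1 := by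
    intro hz k hk1 hk2
    obtain ⟨t, rfl⟩ : ∃ t, k = t + 1 := ⟨k - 1, by omega⟩
    refine diffs_const u h1 (m+1) (fun k hk => ?_) t (by omega)
    have := hz k (mem_range.2 hk)
    have h0 := pow_eq_zero_iff (n := 2) (by norm_num) |>.1 this
    linarith
  by_cases hC : u (m+4) - u (m+3) = 0
  · by_cases hA : u (m+3) + u (m+4) - u (m+2) = 0
    · have hS1 : ∑ k ∈ range (m+1), (u (k+2) - u (k+1)) ^ 2 = 1 := by
        rw [hA, hC] at hkey; simpa using hkey
      have hne : ∑ k ∈ range (m+1), (u (k+2) - u (k+1)) ^ 2 ≠ 0 := by omega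
      obtain ⟨k0, hk0mem, _⟩ := Finset.exists_ne_zero_of_sum_ne_zero hne
      have hk0m := mem_range.1 hk0mem
      have hsplit : (u (k0+2) - u (k0+1)) ^ 2
          + ∑ k ∈ (range (m+1)).erase k0, (u (k+2) - u (k+1)) ^ 2
          = ∑ k ∈ range (m+1), (u (k+2) - u (k+1)) ^ 2 :=
        Finset.add_sum_erase (range (m+1)) (fun k => (u (k+2) - u (k+1)) ^ 2) hk0mem
      have hrnn : 0 ≤ ∑ k ∈ (range (m+1)).erase k0, (u (k+2) - u (k+1)) ^ 2 :=
        sum_nonneg fun k _ => sq_nonneg _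
      have hd0nn : (0:ℤ) ≤ (u (k0+2) - u (k0+1)) ^ 2 := sq_nonneg _
      have hd1 : (u (k0+2) - u (k0+1)) ^ 2 = 1 := by
        rcases eq_or_ne (u (k0+2) - u (k0+1)) 0 with hz | hz
        · exfalso
          have : (u (k0+2) - u (k0+1)) ^ 2 = 0 := by rw [hz]; ring
          -- then the sum over erase is 1 but each term squares... contradiction needs more
          omega
        · have := one_le_sq hz; omega
      have hrz : ∑ k ∈ (range (m+1)).erase k0, (u (k+2) - u (k+1)) ^ 2 = 0 := by omega
      have hzero : ∀ k, k < m+1 → k ≠ k0 → u (k+2) - u (k+1) = 0 := by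
        intro k hk hkne
        have := (Finset.sum_eq_zero_iff_of_nonneg (fun i _ => sq_nonneg _)).1 hrz k
          (by simp [Finset.mem_erase, mem_range]; omega)
        have h0 := pow_eq_zero_iff (n := 2) (by norm_num) |>.1 this
        linarith
      set ε := u (k0+2) - u (k0+1) with hε
      have hεval := sq_eq_one hd1
      have hdall : ∀ k, k < m+1 → u (k+2) - u (k+1) = if k = k0 then ε else 0 := by
        intro k hk
        by_cases hkk : k = k0
        · rw [if_pos hkk, hkk]
        · rw [if_neg hkk]; exact hzero k hk hkk
      have hstep := diffs_step u ε h1 (m+1) k0 hk0m hdall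
      refine Or.inr ⟨k0+2, ε, by omega, by omega, hεval, ?_, ?_⟩
      · intro k hk1 hk2
        obtain ⟨t, rfl⟩ : ∃ t, k = t + 1 := ⟨k - 1, by omega⟩
        exact hstep t (by omega)
      · have hm2 := hstep (m+1) (by omega)
        have e : m + 1 + 1 = m + 2 := rfl
        rw [e] at hm2
        rcases hm2 with ⟨ha, hb⟩ | ⟨ha, hb⟩
        · omega
        · omega
    · have hC2 : (u (m+4) - u (m+3)) ^ 2 = 0 := by rw [hC]; ring
      have hA1 := one_le_sq hA
      have hS0 : ∑ k ∈ range (m+1), (u (k+2) - u (k+1)) ^ 2 = 0 := by omega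
      have hA2 : (u (m+3) + u (m+4) - u (m+2)) ^ 2 = 1 := by omega
      have hv := hconst ((Finset.sum_eq_zero_iff_of_nonneg (fun i _ => sq_nonneg _)).1 hS0)
      refine Or.inr ⟨m+3, u (m+3) + u (m+4) - u (m+2), by omega, by omega, sq_eq_one hA2,
        fun k hk1 hk2 => Or.inl ⟨by omega, hv k hk1 hk2⟩, ?_⟩
      have := hv (m+2) (by omega) (by omega)
      omega
  · have hC1 := one_le_sq hC
    have hS0 : ∑ k ∈ range (m+1), (u (k+2) - u (k+1)) ^ 2 = 0 := by omega
    have hA2 : (u (m+3) + u (m+4) - u (m+2)) ^ 2 = 0 := by omega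
    have hA0 : u (m+3) + u (m+4) - u (m+2) = 0 := by
      have := pow_eq_zero_iff (n := 2) (by norm_num) |>.1 hA2; linarith
    have hv := hconst ((Finset.sum_eq_zero_iff_of_nonneg (fun i _ => sq_nonneg _)).1 hS0)
    left
    refine ⟨hv, ?_⟩
    have := hv (m+2) (by omega) (by omega)
    omega

/-! ### Coordinate helpers -/

/-- The involution `τ` on raw indices. -/
def tv (m k : ℕ) : ℕ :=
  if k = 0 then 1 else if k = 1 then 0 else if k = m+3 then m+4
  else if k = m+4 then m+3 else k

lemma mk_zero' (m : ℕ) (h : 0 < m+5) : (⟨0, h⟩ : Fin (m+5)) = 0 := by ext; simp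

lemma mk_one' (m : ℕ) (h : 1 < m+5) : (⟨1, h⟩ : Fin (m+5)) = 1 := by
  ext; rw [Fin.val_one']; rw [Nat.mod_eq_of_lt (by omega)]

lemma hidx {m : ℕ} (v : Q (m+4)) (k : ℕ) (h : k < m+5) : v ⟨k, h⟩ = uu (m+4) v k :=
  uu_coord v ⟨k, h⟩

lemma sigma_mk (m : ℕ) (v : Q (m+4)) (k : ℕ) (h : k < m+5) :
    σmap (m+4) v ⟨k, h⟩ = uu (m+4) v (tv m k) := by
  have hval : ((τ (m+4) ⟨k, h⟩ : Fin (m+5)) : ℕ) = tv m k := by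
    show (if k = 0 then min 1 (m+4) else if k = 1 then 0
      else if k = m+4-1 then m+4 else if k = m+4 then m+4-1 else k) = tv m k
    unfold tv
    split_ifs <;> omega
  show v (τ (m+4) ⟨k, h⟩) = _
  rw [uu_coord v (τ (m+4) ⟨k, h⟩), hval]

lemma delta_mk (m : ℕ) (k : ℕ) (h : k < m+5) :
    δ (m+4) ⟨k, h⟩ = if k = 0 ∨ k = 1 ∨ k = m+3 ∨ k = m+4 then 1 else 2 := by
  show (if k = 0 ∨ k = 1 ∨ k = m+4-1 ∨ k = m+4 then (1:ℤ) else 2) = _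
  split_ifs <;> first | rfl | (exfalso; omega)

lemma tv_zero (m : ℕ) : tv m 0 = 1 := by
  unfold tv; split_ifs <;> first | rfl | contradiction | omega

lemma tv_one (m : ℕ) : tv m 1 = 0 := by
  unfold tv; split_ifs <;> first | rfl | contradiction | omega

lemma tv_t3 (m : ℕ) : tv m (m+3) = m+4 := by
  unfold tv; split_ifs <;> first | rfl | contradiction | omega

lemma tv_t4 (m : ℕ) : tv m (m+4) = m+3 := by
  unfold tv; split_ifs <;> first | rfl | contradiction | omega

lemma tv_mid (m k : ℕ) (h1 : 2 ≤ k) (h2 : k ≤ m+2) : tv m k = k := by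
  unfold tv; split_ifs <;> first | rfl | contradiction | omega

/-! ### The main theorem -/

set_option maxHeartbeats 1000000 in
theorem statement6 (n : ℕ) (hn : 4 ≤ n) : ∀ α ∈ Δ0Pos n,
    ((α ∈ Δ0'Pos n) ∨
      (∃ m : ℤ, 0 < m ∧ α + σmap n α = m • δ n) ∨
      (∃ β ∈ Δ0' n, σmap n β ≠ β ∧ α + σmap n α = δ n + β + σmap n β)) ∧
    ¬((α ∈ Δ0'Pos n) ∧ (∃ m : ℤ, 0 < m ∧ α + σmap n α = m • δ n)) ∧
    ¬((α ∈ Δ0'Pos n) ∧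
      (∃ β ∈ Δ0' n, σmap n β ≠ β ∧ α + σmap n α = δ n + β + σmap n β)) ∧
    ¬((∃ m : ℤ, 0 < m ∧ α + σmap n α = m • δ n) ∧
      (∃ β ∈ Δ0' n, σmap n β ≠ β ∧ α + σmap n α = δ n + β + σmap n β)) := by
  obtain ⟨m, rfl⟩ : ∃ m, n = m + 4 := ⟨n - 4, by omega⟩
  clear hn
  rintro α ⟨⟨hpos, hB⟩, h0⟩
  have hu0 : uu (m+4) α 0 = 0 := by
    rw [← hidx α 0 (by omega), mk_zero' m]; exact h0
  have hupos : ∀ k, 0 ≤ uu (m+4) α k := by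
    intro k; unfold uu; split
    · exact hpos _
    · exact le_refl 0
  have hBsq : uu (m+4) α 1 ^ 2
      + ∑ k ∈ range (m+1), (uu (m+4) α (k+2) - uu (m+4) α (k+1)) ^ 2
      + (uu (m+4) α (m+3) + uu (m+4) α (m+4) - uu (m+4) α (m+2)) ^ 2
      + (uu (m+4) α (m+4) - uu (m+4) α (m+3)) ^ 2 = 2 := by
    rw [← Bsq m α hu0]; exact hB
  refine ⟨?_, ?_, ?_, ?_⟩
  · -- existence
    by_cases h1 : uu (m+4) α 1 = 0
    · left
      refine ⟨⟨hB, h0, ?_⟩, hpos⟩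
      rw [← mk_one' m (by omega), hidx α 1 (by omega)]
      exact h1
    · -- u 1 = 1
      have hge : 1 ≤ uu (m+4) α 1 := by have := hupos 1; omega
      have hSnn : 0 ≤ ∑ k ∈ range (m+1), (uu (m+4) α (k+2) - uu (m+4) α (k+1)) ^ 2 :=
        sum_nonneg fun k _ => sq_nonneg _
      have h2le : uu (m+4) α 1 ^ 2 ≤ 2 := by
        nlinarith [sq_nonneg (uu (m+4) α (m+3) + uu (m+4) α (m+4) - uu (m+4) α (m+2)),
          sq_nonneg (uu (m+4) α (m+4) - uu (m+4) α (m+3))]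
      have h1' : uu (m+4) α 1 = 1 := by
        have h3 : 2 * uu (m+4) α 1 ≤ 3 := by nlinarith [sq_nonneg (uu (m+4) α 1 - 1)]
        omega
      rcases classify m (uu (m+4) α) h1' hBsq with ⟨hval, hsum⟩ | ⟨j, ε, hj2, hj3, hε, hval, hsum⟩
      · -- case (b)
        right; left
        refine ⟨1, one_pos, ?_⟩
        rw [one_smul]
        funext i
        obtain ⟨k, h, rfl⟩ : ∃ (k : ℕ) (h : k < m+5), i = ⟨k, h⟩ := ⟨↑i, i.isLt, by ext; rfl⟩
        simp only [Pi.add_apply]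
        rw [hidx α k h, sigma_mk m α k h, delta_mk m k h]
        rcases (by omega : k = 0 ∨ k = 1 ∨ (2 ≤ k ∧ k ≤ m+2) ∨ k = m+3 ∨ k = m+4)
          with hk | hk | hk | hk | hk
        · subst hk
          have ht : tv m 0 = 1 := tv_zero m
          rw [ht, if_pos (by omega)]
          omega
        · subst hk
          have ht : tv m 1 = 0 := tv_one m
          rw [ht, if_pos (by omega)]
          omega
        · have ht : tv m k = k := tv_mid m k (by omega) (by omega)
          rw [ht, if_neg (by omega)]
          have := hval k (by omega) (by omega)
          omega
        · subst hk
          have ht : tv m (m+3) = m+4 := tv_t3 m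
          rw [ht, if_pos (by omega)]
          omega
        · subst hk
          have ht : tv m (m+4) = m+3 := tv_t4 m
          rw [ht, if_pos (by omega)]
          omega
      · -- case (c)
        right; right
        set β : Q (m+4) := fun i =>
          if (j ≤ (i:ℕ) ∧ (i:ℕ) ≤ m+2) ∨ (i:ℕ) = m+4 then ε else 0 with hβdef
        have huβ : ∀ k, uu (m+4) β k
            = if (j ≤ k ∧ k ≤ m+2) ∨ k = m+4 then ε else 0 := by
          intro k
          unfold uu
          split
          · rfl
          · rw [if_neg (by omega)]
        have hε2 : ε ^ 2 = 1 := by rcases hε with h | h <;> rw [h] <;> ring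
        have hεne : ε ≠ 0 := by rcases hε with h | h <;> rw [h] <;> norm_num
        have hβ0u : uu (m+4) β 0 = 0 := by rw [huβ 0, if_neg (by omega)]
        have hβ1u : uu (m+4) β 1 = 0 := by rw [huβ 1, if_neg (by omega)]
        have hBβ : B (m+4) β β = 2 := by
          rw [Bsq m β hβ0u]
          have eb : ∀ k ∈ range (m+1), (uu (m+4) β (k+2) - uu (m+4) β (k+1)) ^ 2
              = if k = j - 2 then 1 else 0 := by
            intro k hk
            rw [mem_range] at hk
            rw [huβ (k+2), huβ (k+1)]
            split_ifs <;> first | (exfalso; omega) | ring1 | linear_combination hε2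
          rw [sum_congr rfl eb, Finset.sum_ite_eq' (range (m+1)) (j-2) (fun _ => (1:ℤ))]
          have hmem : (if j - 2 ∈ range (m+1) then (1:ℤ) else 0)
              = if j ≤ m+2 then 1 else 0 := by
            simp only [mem_range]
            split_ifs <;> first | rfl | (exfalso; omega)
          rw [hmem, huβ (m+2), huβ (m+3), huβ (m+4), hβ1u]
          split_ifs <;> first | (exfalso; omega) | linear_combination hε2 |
            linear_combination 2 * hε2
        refine ⟨β, ⟨hBβ, ?_, ?_⟩, ?_, ?_⟩
        · have := uu_coord β 0
          rw [show (((0 : Fin (m+5))):ℕ) = 0 from by simp] at this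
          rw [this, hβ0u]
        · have := uu_coord β 1
          rw [show (((1 : Fin (m+5))):ℕ) = 1 from by
            rw [Fin.val_one']; exact Nat.mod_eq_of_lt (by omega)] at this
          rw [this, hβ1u]
        · -- σ β ≠ β
          intro hcon
          have h5 := congrFun hcon ⟨m+4, by omega⟩
          rw [sigma_mk m β (m+4) (by omega), hidx β (m+4) (by omega)] at h5
          have ht : tv m (m+4) = m+3 := tv_t4 m
          rw [ht, huβ (m+3), huβ (m+4), if_neg (by omega), if_pos (by omega)] at h5
          exact hεne h5.symm
        · funext i
          obtain ⟨k, h, rfl⟩ : ∃ (k : ℕ) (h : k < m+5), i = ⟨k, h⟩ := ⟨↑i, i.isLt, by ext; rfl⟩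
          simp only [Pi.add_apply]
          rw [hidx α k h, sigma_mk m α k h, delta_mk m k h,
            hidx β k h, sigma_mk m β k h, huβ k]
          rcases (by omega : k = 0 ∨ k = 1 ∨ (2 ≤ k ∧ k ≤ m+2) ∨ k = m+3 ∨ k = m+4)
            with hk | hk | hk | hk | hk
          · subst hk
            have ht : tv m 0 = 1 := tv_zero m
            rw [ht, huβ 1]
            rw [if_pos (by omega), if_neg (by omega), if_neg (by omega)]
            omega
          · subst hk
            have ht : tv m 1 = 0 := tv_one m
            rw [ht, huβ 0]
            rw [if_pos (by omega), if_neg (by omega), if_neg (by omega)]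
            omega
          · have ht : tv m k = k := tv_mid m k (by omega) (by omega)
            rw [ht, huβ k]
            have := hval k (by omega) (by omega)
            rcases this with ⟨hlt, hv⟩ | ⟨hle, hv⟩
            · rw [if_neg (by omega), if_neg (by omega)]
              omega
            · rw [if_neg (by omega), if_pos (by omega)]
              omega
          · subst hk
            have ht : tv m (m+3) = m+4 := tv_t3 m
            rw [ht, huβ (m+4)]
            rw [if_pos (by omega), if_neg (by omega), if_pos (by omega)]
            omega
          · subst hk
            have ht : tv m (m+4) = m+3 := tv_t4 m
            rw [ht, huβ (m+3)]
            rw [if_pos (by omega), if_pos (by omega), if_neg (by omega)]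
            omega
  · -- ¬ (a ∧ b)
    rintro ⟨⟨⟨-, -, ha1⟩, -⟩, M, hM, heq⟩
    have ha1' : uu (m+4) α 1 = 0 := by
      rw [← hidx α 1 (by omega), mk_one' m]; exact ha1
    have h5 := congrFun heq ⟨1, by omega⟩
    simp only [Pi.add_apply, Pi.smul_apply, smul_eq_mul] at h5
    rw [hidx α 1 (by omega), sigma_mk m α 1 (by omega), delta_mk m 1 (by omega)] at h5
    have ht : tv m 1 = 0 := tv_one m
    rw [ht, if_pos (by omega)] at h5
    omega
  · -- ¬ (a ∧ c)
    rintro ⟨⟨⟨-, -, ha1⟩, -⟩, β, ⟨hBβ, hβ0, hβ1⟩, hne, heq⟩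
    have ha1' : uu (m+4) α 1 = 0 := by
      rw [← hidx α 1 (by omega), mk_one' m]; exact ha1
    have hb0' : uu (m+4) β 0 = 0 := by
      rw [← hidx β 0 (by omega), mk_zero' m]; exact hβ0
    have hb1' : uu (m+4) β 1 = 0 := by
      rw [← hidx β 1 (by omega), mk_one' m]; exact hβ1
    have h5 := congrFun heq ⟨1, by omega⟩
    simp only [Pi.add_apply] at h5
    rw [hidx α 1 (by omega), sigma_mk m α 1 (by omega), delta_mk m 1 (by omega),
      hidx β 1 (by omega), sigma_mk m β 1 (by omega)] at h5
    have ht : tv m 1 = 0 := tv_one m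
    rw [ht, if_pos (by omega)] at h5
    omega
  · -- ¬ (b ∧ c)
    rintro ⟨⟨M, hM, hMeq⟩, β, ⟨hBβ, hβ0, hβ1⟩, hne, hceq⟩
    have heq2 : M • δ (m+4) = δ (m+4) + β + σmap (m+4) β := hMeq.symm.trans hceq
    have hb0' : uu (m+4) β 0 = 0 := by
      rw [← hidx β 0 (by omega), mk_zero' m]; exact hβ0
    have hb1' : uu (m+4) β 1 = 0 := by
      rw [← hidx β 1 (by omega), mk_one' m]; exact hβ1
    have hM1 : M = 1 := by
      have h5 := congrFun heq2 ⟨0, by omega⟩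
      simp only [Pi.add_apply, Pi.smul_apply, smul_eq_mul] at h5
      rw [delta_mk m 0 (by omega), hidx β 0 (by omega), sigma_mk m β 0 (by omega)] at h5
      have ht : tv m 0 = 1 := tv_zero m
      rw [ht, if_pos (by omega)] at h5
      omega
    subst hM1
    have hz : ∀ k, 2 ≤ k → k ≤ m+2 → uu (m+4) β k = 0 := by
      intro k hk2 hk3
      have h5 := congrFun heq2 ⟨k, by omega⟩
      simp only [Pi.add_apply, Pi.smul_apply, smul_eq_mul] at h5
      rw [hidx β k (by omega), sigma_mk m β k (by omega)] at h5
      have ht : tv m k = k := tv_mid m k (by omega) (by omega)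
      rw [ht] at h5
      omega
    have hz34 : uu (m+4) β (m+3) + uu (m+4) β (m+4) = 0 := by
      have h5 := congrFun heq2 ⟨m+3, by omega⟩
      simp only [Pi.add_apply, Pi.smul_apply, smul_eq_mul] at h5
      rw [hidx β (m+3) (by omega), sigma_mk m β (m+3) (by omega)] at h5
      have ht : tv m (m+3) = m+4 := tv_t3 m
      rw [ht] at h5
      omega
    have hfinal := (Bsq m β hb0').symm.trans hBβ
    have hS : ∑ k ∈ range (m+1), (uu (m+4) β (k+2) - uu (m+4) β (k+1)) ^ 2 = 0 := by
      refine sum_eq_zero fun k hk => ?_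
      rw [mem_range] at hk
      have e1 : uu (m+4) β (k+1) = 0 := by
        by_cases hk0 : k = 0
        · subst hk0; exact hb1'
        · exact hz (k+1) (by omega) (by omega)
      have e2 : uu (m+4) β (k+2) = 0 := hz (k+2) (by omega) (by omega)
      rw [e1, e2]; ring
    have em2 : uu (m+4) β (m+2) = 0 := hz (m+2) (by omega) (by omega)
    have h3 : uu (m+4) β (m+3) = - uu (m+4) β (m+4) := by omega
    rw [hS, hb1', em2, h3] at hfinal
    rcases eq_or_ne (uu (m+4) β (m+4)) 0 with hq | hq
    · rw [hq] at hfinal; norm_num at hfinal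
    · have := one_le_sq hq
      nlinarith [hfinal, this]

end Stmt6
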